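/- Let k ≥ 2 be an integer. For every real number a with 0 ≤ a < 1, (2(k-2)/3) · (∑_{i=0}^{k-1} a^i - k a^{k-1}) < ∑_{i=0}^{k-2} (k-1-i) a^i. -/

import Mathlib

open Finset

lemma E1 (a : ℝ) (j : ℕ) : (1 - a) * ∑ m ∈ range j, a ^ m = 1 - a ^ j := by
  induction j with
  | zero => simp
  | succ n ih => rw [sum_range_succ]; linear_combination ih

lemma E2 (a : ℝ) (j : ℕ) :
    (1 - a) * ∑ m ∈ range j, (m : ℝ) * a ^ m
      = (∑ m ∈ range j, a ^ m) - 1 + a ^ j - (j : ℝ) * a ^ j := by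
  induction j with
  | zero => simp
  | succ n ih => rw [sum_range_succ, sum_range_succ]; push_cast; linear_combination ih

lemma E3 (a : ℝ) (j : ℕ) :
    (1 - a) * ∑ m ∈ range j, ((m : ℝ) + 1) * ((m : ℝ) + 2) / 2 * a ^ m
      = (∑ m ∈ range j, (m : ℝ) * a ^ m) + (∑ m ∈ range j, a ^ m)
        - (j : ℝ) * ((j : ℝ) + 1) / 2 * a ^ j := by
  induction j with
  | zero => simp
  | succ n ih =>
      rw [sum_range_succ, sum_range_succ, sum_range_succ]; push_cast; linear_combination ih

lemma E4 (a : ℝ) (j : ℕ) :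
    (1 - a) * ∑ m ∈ range j, (m : ℝ) * ((m : ℝ) + 1) * ((m : ℝ) + 2) / 2 * a ^ m
      = 3 * (∑ m ∈ range j, ((m : ℝ) + 1) * ((m : ℝ) + 2) / 2 * a ^ m)
        - 3 * (∑ m ∈ range j, (m : ℝ) * a ^ m) - 3 * (∑ m ∈ range j, a ^ m)
        - ((j : ℝ) - 1) * (j : ℝ) * ((j : ℝ) + 1) / 2 * a ^ j := by
  induction j with
  | zero => simp
  | succ n ih =>
      rw [sum_range_succ, sum_range_succ, sum_range_succ, sum_range_succ]
      push_cast; linear_combination ih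

lemma keyIdent (a : ℝ) (j : ℕ) :
    ∑ m ∈ range (j + 1), ((j : ℝ) + 3 - 3 * m) * a ^ m + 2 * ((j : ℝ) + 1) * j * a ^ (j + 1)
      = (1 - a) ^ 2 * ∑ m ∈ range j,
          ((m : ℝ) + 1) * ((m : ℝ) + 2) * ((j : ℝ) + 3 - m) / 2 * a ^ m
        + 3 * ((j : ℝ) + 1) * ((j : ℝ) + 2) / 2 * a ^ j := by
  have hL : ∑ m ∈ range (j + 1), ((j : ℝ) + 3 - 3 * m) * a ^ m
      = ((j : ℝ) + 3) * ∑ m ∈ range (j + 1), a ^ m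
        - 3 * ∑ m ∈ range (j + 1), (m : ℝ) * a ^ m := by
    rw [mul_sum, mul_sum, ← Finset.sum_sub_distrib]
    exact sum_congr rfl fun m _ => by ring
  have hD : ∑ m ∈ range j, ((m : ℝ) + 1) * ((m : ℝ) + 2) * ((j : ℝ) + 3 - m) / 2 * a ^ m
      = ((j : ℝ) + 3) * ∑ m ∈ range j, ((m : ℝ) + 1) * ((m : ℝ) + 2) / 2 * a ^ m
        - ∑ m ∈ range j, (m : ℝ) * ((m : ℝ) + 1) * ((m : ℝ) + 2) / 2 * a ^ m := by
    rw [mul_sum, ← Finset.sum_sub_distrib]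
    exact sum_congr rfl fun m _ => by ring
  have e1 := E1 a j
  have e2 := E2 a j
  have e3 := E3 a j
  have e4 := E4 a j
  have hp2 : (1 - a) ^ 2 * ∑ m ∈ range j, ((m : ℝ) + 1) * ((m : ℝ) + 2) / 2 * a ^ m
      = (∑ m ∈ range j, a ^ m) - (j : ℝ) * a ^ j - (j : ℝ) * ((j : ℝ) + 1) / 2 * a ^ j
        + (j : ℝ) * ((j : ℝ) + 1) / 2 * a ^ (j + 1) := by
    linear_combination (1 - a) * e3 + e2 + e1
  have hq2 : (1 - a) ^ 2 * ∑ m ∈ range j, (m : ℝ) * ((m : ℝ) + 1) * ((m : ℝ) + 2) / 2 * a ^ m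
      = 3 * (∑ m ∈ range j, (m : ℝ) * a ^ m) + 3 * (j : ℝ) * a ^ j
        - 3 * (j : ℝ) * ((j : ℝ) + 1) / 2 * a ^ j
        - ((j : ℝ) - 1) * (j : ℝ) * ((j : ℝ) + 1) / 2 * a ^ j
        + ((j : ℝ) - 1) * (j : ℝ) * ((j : ℝ) + 1) / 2 * a ^ (j + 1) := by
    linear_combination (1 - a) * e4 + 3 * e3 - 3 * e2 - 3 * e1
  rw [hL, hD, sum_range_succ (fun m => a ^ m), sum_range_succ (fun m => (m : ℝ) * a ^ m)]
  linear_combination (-((j : ℝ) + 3)) * hp2 + hq2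

lemma Fpos (a : ℝ) (ha : 0 ≤ a) (ha1 : a < 1) (j : ℕ) :
    0 < ∑ m ∈ range (j + 1), ((j : ℝ) + 3 - 3 * m) * a ^ m
        + 2 * ((j : ℝ) + 1) * j * a ^ (j + 1) := by
  rcases ha.eq_or_lt with h0 | h0
  · subst h0
    rw [Finset.sum_range_succ']
    simp [pow_succ]
    positivity
  · rw [keyIdent]
    have h1 : 0 ≤ (1 - a) ^ 2 * ∑ m ∈ range j,
        ((m : ℝ) + 1) * ((m : ℝ) + 2) * ((j : ℝ) + 3 - m) / 2 * a ^ m := by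
      apply mul_nonneg (sq_nonneg _)
      apply sum_nonneg
      intro m hm
      have hmj : (m : ℝ) ≤ j := by exact_mod_cast (mem_range.mp hm).le
      have : (0:ℝ) < (j : ℝ) + 3 - m := by linarith
      positivity
    have h2 : 0 < 3 * ((j : ℝ) + 1) * ((j : ℝ) + 2) / 2 * a ^ j := by positivity
    linarith

theorem stmt_6 (k : ℕ) (hk : 2 ≤ k) (a : ℝ) (ha : 0 ≤ a) (ha1 : a < 1) :
    (2 * ((k : ℝ) - 2) / 3) * (∑ i ∈ Finset.range k, a ^ i - k * a ^ (k - 1))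
      < ∑ i ∈ Finset.range (k - 1), ((k : ℝ) - 1 - i) * a ^ i := by
  obtain ⟨j, rfl⟩ : ∃ j, k = j + 2 := ⟨k - 2, by omega⟩
  have hF := Fpos a ha ha1 j
  have hSt : ∑ i ∈ range (j + 1), (((j:ℕ) + 2 : ℝ) - 1 - (i : ℝ)) * a ^ i
      = ∑ i ∈ range (j + 1), (((j : ℝ) + 1 - i)) * a ^ i :=
    sum_congr rfl fun m _ => by ring
  have hsplit : ∑ i ∈ range (j + 1), ((j : ℝ) + 3 - 3 * i) * a ^ i
      = 3 * ∑ i ∈ range (j + 1), ((j : ℝ) + 1 - i) * a ^ i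
        - 2 * (j : ℝ) * ∑ i ∈ range (j + 1), a ^ i := by
    rw [mul_sum, mul_sum, ← Finset.sum_sub_distrib]
    exact sum_congr rfl fun m _ => by ring
  have hg2 : ∑ i ∈ range (j + 2), a ^ i = ∑ i ∈ range (j + 1), a ^ i + a ^ (j + 1) :=
    sum_range_succ _ _
  have hidx : j + 2 - 1 = j + 1 := rfl
  rw [hidx]
  push_cast
  rw [hSt, hg2]
  nlinarith [hF, hsplit]
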